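/- arXiv:2411.08590 — 7 statements merged into one kernel-verified Lean document; each statement's English description precedes it below -/
import Mathlib

section
/- Let f := indicator of F := {q ∈ ℝ^D : ‖q‖ ≤ 1 ∧ 1ᵀq = 0}. Then f*(z) = ‖z − μ_z·1‖ where μ_z = (1ᵀz)/D, and for z not a multiple of the all-ones vector, the unique maximizer of ⟨z, q⟩ over F is (z − μ_z·1)/‖z − μ_z·1‖. -/
/-- For `F = {q : ‖q‖ ≤ 1 ∧ 1ᵀq = 0}`, the conjugate of its indicator is
`f*(z) = ‖z − μ_z 1‖` where `μ_z = (1ᵀz)/D`, and for `z` not a multiple of the all-ones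
vector, the unique maximizer of `⟨z, q⟩` over `F` is `(z − μ_z 1)/‖z − μ_z 1‖`. -/
theorem conjugate_centered_ball_indicator {D : ℕ} (hD : 0 < D)
    (ones : EuclideanSpace ℝ (Fin D)) (hones : ∀ i, ones i = 1)
    (z : EuclideanSpace ℝ (Fin D)) :
    IsLUB {v : ℝ | ∃ q : EuclideanSpace ℝ (Fin D),
        ‖q‖ ≤ 1 ∧ (∑ i, q i) = 0 ∧ v = (inner ℝ z q : ℝ)}
      ‖z - ((∑ i, z i) / D) • ones‖ ∧
    ((∀ c : ℝ, z ≠ c • ones) →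
      ∀ q : EuclideanSpace ℝ (Fin D), ‖q‖ ≤ 1 → (∑ i, q i) = 0 →
        (inner ℝ z q : ℝ) = ‖z - ((∑ i, z i) / D) • ones‖ →
        q = ‖z - ((∑ i, z i) / D) • ones‖⁻¹ • (z - ((∑ i, z i) / D) • ones)) := by
  set μ : ℝ := (∑ i, z i) / D with hμ
  set w : EuclideanSpace ℝ (Fin D) := z - μ • ones with hw
  have hDR : (D : ℝ) ≠ 0 := Nat.cast_ne_zero.mpr hD.ne'
  -- inner ones q = ∑ q i
  have hinner_ones : ∀ q : EuclideanSpace ℝ (Fin D), (inner ℝ ones q : ℝ) = ∑ i, q i := by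
    intro q
    simp [PiLp.inner_apply, hones]
  -- inner z q = inner w q when ∑ q = 0
  have hkey : ∀ q : EuclideanSpace ℝ (Fin D), (∑ i, q i) = 0 →
      (inner ℝ z q : ℝ) = (inner ℝ w q : ℝ) := by
    intro q hq
    have : (inner ℝ (μ • ones) q : ℝ) = 0 := by
      rw [real_inner_smul_left, hinner_ones, hq, mul_zero]
    rw [hw, inner_sub_left, this, sub_zero]
  -- ∑ w i = 0
  have hsumw : (∑ i, w i) = 0 := by
    have : (∑ i, w i) = (∑ i, z i) - μ * D := by
      simp [hw, Finset.sum_sub_distrib, hones, mul_comm]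
    rw [this, hμ, div_mul_cancel₀ _ hDR, sub_self]
  -- upper bound
  have hub : ∀ v ∈ {v : ℝ | ∃ q : EuclideanSpace ℝ (Fin D),
      ‖q‖ ≤ 1 ∧ (∑ i, q i) = 0 ∧ v = (inner ℝ z q : ℝ)}, v ≤ ‖w‖ := by
    rintro v ⟨q, hq1, hq0, rfl⟩
    rw [hkey q hq0]
    calc (inner ℝ w q : ℝ) ≤ ‖w‖ * ‖q‖ := real_inner_le_norm w q
      _ ≤ ‖w‖ * 1 := by nlinarith [norm_nonneg w]
      _ = ‖w‖ := mul_one _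
  -- membership (IsGreatest)
  have hmem : ‖w‖ ∈ {v : ℝ | ∃ q : EuclideanSpace ℝ (Fin D),
      ‖q‖ ≤ 1 ∧ (∑ i, q i) = 0 ∧ v = (inner ℝ z q : ℝ)} := by
    by_cases hw0 : w = 0
    · exact ⟨0, by simp [hw0]⟩
    · refine ⟨‖w‖⁻¹ • w, ?_, ?_, ?_⟩
      · rw [norm_smul, norm_inv, norm_norm, inv_mul_cancel₀ (norm_ne_zero_iff.mpr hw0)]
      · simp [← Finset.mul_sum, hsumw]
      · rw [hkey _ (by simp [← Finset.mul_sum, hsumw]), real_inner_smul_right,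
          real_inner_self_eq_norm_sq, sq, ← mul_assoc,
          inv_mul_cancel₀ (norm_ne_zero_iff.mpr hw0), one_mul]
  constructor
  · exact IsGreatest.isLUB ⟨hmem, hub⟩
  · intro hcz q hq1 hq0 hqi
    have hw0 : w ≠ 0 := by
      intro h
      exact hcz μ (by rw [← sub_eq_zero]; exact h)
    have hnw : ‖w‖ ≠ 0 := norm_ne_zero_iff.mpr hw0
    have hiw : (inner ℝ w q : ℝ) = ‖w‖ := by rw [← hkey q hq0]; exact hqi
    have hq1' : ‖q‖ = 1 := by
      have h1 : (1 : ℝ) ≤ ‖q‖ := by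
        have := real_inner_le_norm w q
        rw [hiw] at this
        nlinarith [norm_nonneg w, (norm_nonneg w).lt_of_ne' hnw]
      linarith
    have heq : ‖q‖ • w = ‖w‖ • q := by
      rw [← inner_eq_norm_mul_iff_real, hiw, hq1', mul_one]
    rw [hq1', one_smul] at heq
    have h2 : ‖w‖⁻¹ • w = ‖w‖⁻¹ • (‖w‖ • q) := by rw [← heq]
    rw [smul_smul, inv_mul_cancel₀ hnw, one_smul] at h2
    exact h2.symm
end

section
/- Let Ψ be the indicator of S := {q : ‖q − δ‖ ≤ η√D ∧ 1ᵀ(q − δ) = 0}, with η > 0 and δ ∈ ℝ^D. Then for z not a multiple of 1, the unique maximizer of ⟨z, q⟩ over S equals LayerNorm(z; η, δ) := η (z − μ_z·1)/√((1/D)Σᵢ(zᵢ − μ_z)²) + δ. -/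
/-- Layer normalization (Proposition 3). For `Ψ` the indicator of
`S = {q : ‖q − δ‖ ≤ η√D ∧ 1ᵀ(q − δ) = 0}` with `η > 0`, and `z` not a multiple of the
all-ones vector, the unique maximizer of `⟨z, q⟩` over `S` equals
`LayerNorm(z; η, δ) = η (z − μ_z 1)/√((1/D)Σᵢ(zᵢ − μ_z)²) + δ`. -/
theorem layerNorm_is_argmax {D : ℕ} (hD : 0 < D) (η : ℝ) (hη : 0 < η)
    (ones : EuclideanSpace ℝ (Fin D)) (hones : ∀ i, ones i = 1)
    (δ z : EuclideanSpace ℝ (Fin D))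
    (hz : ∀ c : ℝ, z ≠ c • ones) :
    ∀ q : EuclideanSpace ℝ (Fin D),
      (‖q - δ‖ ≤ η * Real.sqrt D ∧ (∑ i, (q i - δ i)) = 0 ∧
        ∀ q' : EuclideanSpace ℝ (Fin D),
          ‖q' - δ‖ ≤ η * Real.sqrt D → (∑ i, (q' i - δ i)) = 0 →
          (inner ℝ z q' : ℝ) ≤ (inner ℝ z q : ℝ)) ↔
      q = (η / Real.sqrt ((1 / D) * ∑ i, (z i - (∑ j, z j) / D) ^ 2)) •
            (z - ((∑ j, z j) / D) • ones) + δ := by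
  intro q
  have hDpos : (0:ℝ) < D := by exact_mod_cast hD
  set μ : ℝ := (∑ j, z j) / D with hμ
  set w : EuclideanSpace ℝ (Fin D) := z - μ • ones with hw
  have hwi : ∀ i, w i = z i - μ := by
    intro i
    simp [hw, hones i]
  have hsumw : (∑ i, w i) = 0 := by
    simp only [hwi, Finset.sum_sub_distrib, Finset.sum_const, Finset.card_univ,
      Fintype.card_fin, nsmul_eq_mul, hμ]
    field_simp
    ring
  have hwne : w ≠ 0 := by
    intro h
    apply hz μ
    exact sub_eq_zero.mp (hw ▸ h)
  have hwsq : ‖w‖^2 = ∑ i, (z i - μ)^2 := by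
    rw [EuclideanSpace.norm_eq, Real.sq_sqrt (by positivity)]
    simp [hwi, sq_abs]
  have hwpos : (0:ℝ) < ‖w‖ := norm_pos_iff.mpr hwne
  set R : ℝ := η * Real.sqrt D with hR
  have hRpos : 0 < R := by positivity
  have hc : η / Real.sqrt ((1 / D) * ∑ i, (z i - μ) ^ 2) = R / ‖w‖ := by
    rw [← hwsq]
    rw [show (1 / (D:ℝ)) * ‖w‖^2 = (‖w‖ / Real.sqrt D)^2 by
      rw [div_pow, Real.sq_sqrt hDpos.le]; ring]
    rw [Real.sqrt_sq (by positivity)]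
    rw [hR]
    field_simp
  set k : ℝ := R / ‖w‖ with hk
  have hkpos : 0 < k := div_pos hRpos hwpos
  -- inner decomposition
  have hip : ∀ x y : EuclideanSpace ℝ (Fin D), (inner ℝ x y : ℝ) = ∑ i, x i * y i := by
    intro x y; simp [PiLp.inner_apply, RCLike.inner_apply, mul_comm]
  have hdecomp : ∀ x : EuclideanSpace ℝ (Fin D), (inner ℝ z x : ℝ) = inner ℝ w x + μ * ∑ i, x i := by
    intro x
    rw [hip, hip, Finset.mul_sum, ← Finset.sum_add_distrib]
    congr 1; ext i
    rw [hwi]; ring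
  have hqstar : (η / Real.sqrt ((1 / D) * ∑ i, (z i - μ) ^ 2)) • (z - μ • ones) + δ
      = k • w + δ := by rw [hc, ← hw, hk]
  rw [hqstar]
  -- inner w (q' - δ) bound for feasible q'
  have hbound : ∀ q' : EuclideanSpace ℝ (Fin D), ‖q' - δ‖ ≤ R →
      (inner ℝ w (q' - δ) : ℝ) ≤ k * ‖w‖^2 := by
    intro q' hn
    calc (inner ℝ w (q' - δ) : ℝ) ≤ ‖w‖ * ‖q' - δ‖ := real_inner_le_norm _ _
    _ ≤ ‖w‖ * R := by nlinarith
    _ = k * ‖w‖^2 := by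
        have hkw : k * ‖w‖ = R := div_mul_cancel₀ R (ne_of_gt hwpos)
        nlinarith [hkw]
  have hzq : ∀ q' : EuclideanSpace ℝ (Fin D), (∑ i, (q' i - δ i)) = 0 →
      (inner ℝ z q' : ℝ) = inner ℝ w (q' - δ) + inner ℝ z δ := by
    intro q' hs
    have : (inner ℝ z q' : ℝ) = inner ℝ z (q' - δ) + inner ℝ z δ := by
      rw [← inner_add_right]; norm_num
    rw [this, hdecomp (q' - δ)]
    have : ∑ i, (q' - δ) i = 0 := by simpa using hs
    rw [this]; ring
  have hfeas1 : ‖(k • w + δ) - δ‖ = R := by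
    have h5 : (k • w + δ) - δ = k • w := by abel
    rw [h5, norm_smul, Real.norm_eq_abs, abs_of_pos hkpos, hk,
      div_mul_cancel₀ R (ne_of_gt hwpos)]
  have hfeas2 : (∑ i, ((k • w + δ) i - δ i)) = 0 := by
    have : ∀ i, (k • w + δ) i - δ i = k * w i := by intro i; simp
    simp [this, ← Finset.mul_sum, hsumw]
  have hinnerstar : (inner ℝ w ((k • w + δ) - δ) : ℝ) = k * ‖w‖^2 := by
    have : (k • w + δ) - δ = k • w := by abel
    rw [this, inner_smul_right, real_inner_self_eq_norm_sq]
  constructor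
  · rintro ⟨h1, h2, h3⟩
    -- q is a maximizer; compare with q* = k • w + δ
    have hge := h3 (k • w + δ) (le_of_eq hfeas1) hfeas2
    have hq' := hzq q h2
    have hqs := hzq (k • w + δ) hfeas2
    rw [hq', hqs, hinnerstar] at hge
    have heq : (inner ℝ w (q - δ) : ℝ) = k * ‖w‖^2 := le_antisymm (hbound q h1) (by linarith)
    -- Cauchy-Schwarz equality
    have hnq : ‖q - δ‖ = R := by
      have hcs : (inner ℝ w (q - δ) : ℝ) ≤ ‖w‖ * ‖q - δ‖ := real_inner_le_norm _ _
      have : R ≤ ‖q - δ‖ := by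
        rw [heq, hk] at hcs
        have : R / ‖w‖ * ‖w‖^2 = R * ‖w‖ := by field_simp
        nlinarith
      linarith
    have heq2 : (inner ℝ w (q - δ) : ℝ) = ‖w‖ * ‖q - δ‖ := by
      rw [hnq, heq, hk]; field_simp
    have := (inner_eq_norm_mul_iff_real).mp heq2
    -- ‖q - δ‖ • w = ‖w‖ • (q - δ)
    have hqd : q - δ = k • w := by
      rw [hnq] at this
      have h4 := congrArg (fun v => (‖w‖)⁻¹ • v) this
      simp only [smul_smul, inv_mul_cancel₀ (ne_of_gt hwpos), one_smul] at h4
      rw [← h4, hk, div_eq_inv_mul]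
    rw [← hqd]; abel
  · rintro rfl
    refine ⟨le_of_eq hfeas1, hfeas2, ?_⟩
    intro q' hn hs
    rw [hzq q' hs, hzq _ hfeas2, hinnerstar]
    have := hbound q' hn
    linarith
end

section
/- Let E(q) = −β⁻¹L_Ω(βXq, 1/N) + (1/2)‖q − μ_X‖² + (1/2)(M² − ‖μ_X‖²), where Ω is a generalized negentropy on Δ_N, μ_X = Xᵀ1/N, M = maxᵢ‖xᵢ‖. If q = Xᵀy for some y ∈ Δ_N, then E(q) ≥ (1/2)‖x_k − q‖² ≥ 0 where k = argmaxᵢ ⟨q, xᵢ⟩. -/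
lemma uniform_min_of_symm_convex {N : ℕ} [NeZero N] (Ω : (Fin N → ℝ) → ℝ)
    (hconv : ConvexOn ℝ (stdSimplex ℝ (Fin N)) Ω)
    (hperm : ∀ (σ : Equiv.Perm (Fin N)), ∀ y ∈ stdSimplex ℝ (Fin N), Ω (y ∘ σ) = Ω y)
    (y : Fin N → ℝ) (hy : y ∈ stdSimplex ℝ (Fin N)) :
    Ω (fun _ => 1 / N) ≤ Ω y := by
  have hN : (0:ℝ) < N := by
    exact_mod_cast Nat.pos_of_ne_zero (NeZero.ne N)
  set p : Fin N → (Fin N → ℝ) := fun c => y ∘ (Equiv.addRight c) with hp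
  have hmem : ∀ c : Fin N, p c ∈ stdSimplex ℝ (Fin N) := by
    intro c
    constructor
    · intro j; exact hy.1 _
    · have h := Equiv.sum_comp (Equiv.addRight c) y
      calc ∑ j, p c j = ∑ j, y j := h
        _ = 1 := hy.2
  have hsum : (fun _ => (1:ℝ) / N) = ∑ c : Fin N, ((N:ℝ))⁻¹ • p c := by
    funext j
    have : ∑ c : Fin N, y (j + c) = ∑ i, y i := Equiv.sum_comp (Equiv.addLeft j) y
    simp only [Finset.sum_apply, Pi.smul_apply, smul_eq_mul, hp, Function.comp,
      Equiv.coe_addRight]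
    rw [← Finset.mul_sum, this, hy.2, mul_one, one_div]
  have key := hconv.map_sum_le (t := Finset.univ) (w := fun _ : Fin N => ((N:ℝ))⁻¹)
    (p := p) (fun i _ => by positivity)
    (by simp [Finset.card_univ]) (fun i _ => hmem i)
  rw [← hsum] at key
  calc Ω (fun _ => (1:ℝ)/N) ≤ ∑ c : Fin N, ((N:ℝ))⁻¹ • Ω (p c) := key
    _ = Ω y := by
        have : ∀ c : Fin N, Ω (p c) = Ω y := fun c => hperm (Equiv.addRight c) y hy
        simp [this, smul_eq_mul, ← Finset.mul_sum]
        field_simp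

/-- Lower bound on the sparse HFY energy. With
`E(q) = −β⁻¹ L_Ω(βXq, 1/N) + ½‖q − μ_X‖² + ½(M² − ‖μ_X‖²)`, `Ω` a generalized
negentropy on `Δ_N`, `μ_X = Xᵀ1/N`, `M = maxᵢ‖xᵢ‖`: if `q = Xᵀy` for some `y ∈ Δ_N`,
then `E(q) ≥ ½‖x_k − q‖² ≥ 0`, where `k = argmaxᵢ ⟨q, xᵢ⟩`. -/
theorem hfy_energy_lower_bound {N D : ℕ} [NeZero N]
    (x : Fin N → EuclideanSpace ℝ (Fin D)) (β : ℝ) (hβ : 0 < β)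
    (Ω : (Fin N → ℝ) → ℝ)
    (hzero : ∀ i : Fin N, Ω (fun j => if j = i then 1 else 0) = 0)
    (hconv : StrictConvexOn ℝ (stdSimplex ℝ (Fin N)) Ω)
    (hperm : ∀ (σ : Equiv.Perm (Fin N)), ∀ y ∈ stdSimplex ℝ (Fin N), Ω (y ∘ σ) = Ω y)
    (Ωstar : (Fin N → ℝ) → ℝ)
    (hΩstar : ∀ θ, IsGreatest
      {v : ℝ | ∃ y ∈ stdSimplex ℝ (Fin N), v = (∑ i, θ i * y i) - Ω y} (Ωstar θ))
    (M : ℝ) (hM : IsGreatest (Set.range fun i => ‖x i‖) M)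
    (y : Fin N → ℝ) (hy : y ∈ stdSimplex ℝ (Fin N))
    (q : EuclideanSpace ℝ (Fin D)) (hq : q = ∑ i, y i • x i)
    (k : Fin N) (hk : ∀ j, (inner ℝ q (x j) : ℝ) ≤ (inner ℝ q (x k) : ℝ)) :
    (1 / 2) * ‖x k - q‖ ^ 2 ≤
      -β⁻¹ * (Ω (fun _ => 1 / N) +
          Ωstar (fun i => β * (inner ℝ (x i) q : ℝ)) -
          (∑ i, (β * (inner ℝ (x i) q : ℝ)) * (1 / N)))
        + (1 / 2) * ‖q - (N : ℝ)⁻¹ • ∑ i, x i‖ ^ 2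
        + (1 / 2) * (M ^ 2 - ‖(N : ℝ)⁻¹ • ∑ i, x i‖ ^ 2) ∧
    0 ≤ (1 / 2) * ‖x k - q‖ ^ 2 := by
  have hN : (0:ℝ) < N := by exact_mod_cast Nat.pos_of_ne_zero (NeZero.ne N)
  set θ : Fin N → ℝ := fun i => β * (inner ℝ (x i) q : ℝ) with hθ
  set μ : EuclideanSpace ℝ (Fin D) := (N : ℝ)⁻¹ • ∑ i, x i with hμ
  -- Step 1: Ωstar θ ≤ θ k − Ω uniform
  have hub : Ω (fun _ => 1 / N) + Ωstar θ ≤ θ k := by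
    obtain ⟨z, hz, hzeq⟩ := (hΩstar θ).1
    have h1 : ∑ i, θ i * z i ≤ θ k := by
      calc ∑ i, θ i * z i ≤ ∑ i, θ k * z i := by
            apply Finset.sum_le_sum
            intro i _
            have : (inner ℝ (x i) q : ℝ) ≤ (inner ℝ (x k) q : ℝ) := by
              have h := hk i
              rwa [real_inner_comm (x i) q, real_inner_comm (x k) q] at h
            exact mul_le_mul_of_nonneg_right (by
              simp only [hθ]; exact mul_le_mul_of_nonneg_left this hβ.le) (hz.1 i)
        _ = θ k := by rw [← Finset.mul_sum, hz.2, mul_one]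
    have h2 : Ω (fun _ => 1 / N) ≤ Ω z :=
      uniform_min_of_symm_convex Ω hconv.convexOn hperm z hz
    rw [hzeq]; linarith
  -- Step 2: expand norms
  have e1 : ‖x k - q‖ ^ 2 = ‖x k‖^2 - 2 * (inner ℝ (x k) q : ℝ) + ‖q‖^2 := by
    rw [norm_sub_sq_real]
  have e2 : ‖q - μ‖ ^ 2 = ‖q‖^2 - 2 * (inner ℝ μ q : ℝ) + ‖μ‖^2 := by
    rw [norm_sub_sq_real, real_inner_comm]
  have e3 : (inner ℝ μ q : ℝ) = (N : ℝ)⁻¹ * ∑ i, (inner ℝ (x i) q : ℝ) := by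
    rw [hμ, inner_smul_left, sum_inner]
    simp
  have e4 : ∑ i, θ i * (1 / N) = β * (inner ℝ μ q : ℝ) := by
    rw [e3, Finset.mul_sum, Finset.mul_sum]
    apply Finset.sum_congr rfl
    intro i _
    simp only [hθ]
    field_simp
  have hMk : ‖x k‖ ≤ M := hM.2 ⟨k, rfl⟩
  have hMk0 : (0:ℝ) ≤ ‖x k‖ := norm_nonneg _
  have hMsq : ‖x k‖^2 ≤ M^2 := by nlinarith
  have hβinv : (0:ℝ) < β⁻¹ := inv_pos.mpr hβ
  constructor
  · have key : -β⁻¹ * (Ω (fun _ => 1 / N) + Ωstar θ - ∑ i, θ i * (1 / N)) ≥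
        -β⁻¹ * (θ k - β * (inner ℝ μ q : ℝ)) := by
      rw [e4]
      have := hub
      nlinarith
    have hθk : β⁻¹ * θ k = (inner ℝ (x k) q : ℝ) := by
      rw [hθ]; field_simp
    have hβμ : β⁻¹ * (β * (inner ℝ μ q : ℝ)) = (inner ℝ μ q : ℝ) := by field_simp
    have goal2 : (1 / 2) * ‖x k - q‖ ^ 2 ≤
        -β⁻¹ * (θ k - β * (inner ℝ μ q : ℝ)) + (1/2) * ‖q - μ‖^2 + (1/2)*(M^2 - ‖μ‖^2) := by
      rw [e1, e2]
      have h3 : -β⁻¹ * (θ k - β * (inner ℝ μ q : ℝ)) =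
          -(inner ℝ (x k) q : ℝ) + (inner ℝ μ q : ℝ) := by
        rw [neg_mul, mul_sub, hθk, hβμ]; ring
      rw [h3]; nlinarith
    calc (1 / 2) * ‖x k - q‖ ^ 2 ≤ _ := goal2
      _ ≤ _ := by linarith [key]
  · positivity
end

section
/- Under the same setup, if q = Xᵀy for y ∈ Δ_N, the energy satisfies the upper bound E(q) ≤ min{2M², −β⁻¹Ω(1/N) + (1/2)M²}. -/
/-- Upper bound on the sparse HFY energy. In the same setup as the lower
bound (Proposition 4), if `q = Xᵀy` with `y ∈ Δ_N`, then
`E(q) ≤ min{2M², −β⁻¹Ω(1/N) + ½M²}`. -/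
theorem hfy_energy_upper_bound {N D : ℕ} [NeZero N]
    (x : Fin N → EuclideanSpace ℝ (Fin D)) (β : ℝ) (hβ : 0 < β)
    (Ω : (Fin N → ℝ) → ℝ)
    (hzero : ∀ i : Fin N, Ω (fun j => if j = i then 1 else 0) = 0)
    (hconv : StrictConvexOn ℝ (stdSimplex ℝ (Fin N)) Ω)
    (hperm : ∀ (σ : Equiv.Perm (Fin N)), ∀ y ∈ stdSimplex ℝ (Fin N), Ω (y ∘ σ) = Ω y)
    (Ωstar : (Fin N → ℝ) → ℝ)
    (hΩstar : ∀ θ, IsGreatest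
      {v : ℝ | ∃ y ∈ stdSimplex ℝ (Fin N), v = (∑ i, θ i * y i) - Ω y} (Ωstar θ))
    (M : ℝ) (hM : IsGreatest (Set.range fun i => ‖x i‖) M)
    (y : Fin N → ℝ) (hy : y ∈ stdSimplex ℝ (Fin N))
    (q : EuclideanSpace ℝ (Fin D)) (hq : q = ∑ i, y i • x i) :
    -β⁻¹ * (Ω (fun _ => 1 / N) +
        Ωstar (fun i => β * (inner ℝ (x i) q : ℝ)) -
        (∑ i, (β * (inner ℝ (x i) q : ℝ)) * (1 / N)))
      + (1 / 2) * ‖q - (N : ℝ)⁻¹ • ∑ i, x i‖ ^ 2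
      + (1 / 2) * (M ^ 2 - ‖(N : ℝ)⁻¹ • ∑ i, x i‖ ^ 2) ≤
    min (2 * M ^ 2) (-β⁻¹ * Ω (fun _ => 1 / N) + (1 / 2) * M ^ 2) := by
  have hN : (N : ℝ) ≠ 0 := Nat.cast_ne_zero.mpr (NeZero.ne N)
  have hNpos : (0:ℝ) < N := Nat.cast_pos.mpr (Nat.pos_of_ne_zero (NeZero.ne N))
  set μ : EuclideanSpace ℝ (Fin D) := (N : ℝ)⁻¹ • ∑ i, x i with hμ
  set θ : Fin N → ℝ := fun i => β * (inner ℝ (x i) q : ℝ) with hθ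
  -- uniform distribution is in the simplex
  have hu : (fun _ : Fin N => 1 / (N:ℝ)) ∈ stdSimplex ℝ (Fin N) := by
    constructor
    · intro i; positivity
    · simp [Finset.sum_const, hN]
  -- basic facts about M
  have hM0 : 0 ≤ M := by
    obtain ⟨i, hi⟩ := hM.1
    rw [← hi]; positivity
  have hxM : ∀ i, ‖x i‖ ≤ M := fun i => hM.2 (Set.mem_range_self i)
  -- norm bounds
  have hqM : ‖q‖ ≤ M := by
    rw [hq]
    calc ‖∑ i, y i • x i‖ ≤ ∑ i, ‖y i • x i‖ := norm_sum_le _ _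
      _ ≤ ∑ i, y i * M := by
          apply Finset.sum_le_sum
          intro i _
          rw [norm_smul, Real.norm_eq_abs, abs_of_nonneg (hy.1 i)]
          exact mul_le_mul_of_nonneg_left (hxM i) (hy.1 i)
      _ = M := by rw [← Finset.sum_mul, hy.2, one_mul]
  have hμM : ‖μ‖ ≤ M := by
    rw [hμ, norm_smul, Real.norm_eq_abs, abs_of_nonneg (by positivity : (0:ℝ) ≤ (N:ℝ)⁻¹)]
    calc (N:ℝ)⁻¹ * ‖∑ i, x i‖ ≤ (N:ℝ)⁻¹ * ∑ i, ‖x i‖ := by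
          apply mul_le_mul_of_nonneg_left (norm_sum_le _ _) (by positivity)
      _ ≤ (N:ℝ)⁻¹ * ∑ _i : Fin N, M := by
          apply mul_le_mul_of_nonneg_left (Finset.sum_le_sum fun i _ => hxM i) (by positivity)
      _ = M := by field_simp [Finset.sum_const]; simp
  -- Ω y ≤ 0 by Jensen
  have hΩy : Ω y ≤ 0 := by
    have hrep : y = ∑ i, y i • (fun j => if j = i then (1:ℝ) else 0) := by
      funext j
      simp [Finset.sum_apply, Finset.sum_ite_eq, mul_ite]
    have hmem : ∀ i ∈ Finset.univ, (fun j => if j = i then (1:ℝ) else 0) ∈ stdSimplex ℝ (Fin N) := by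
      intro i _
      constructor
      · intro j; by_cases h : j = i <;> simp [h]
      · simp
    have := hconv.convexOn.map_sum_le (fun i _ => hy.1 i) hy.2 hmem
    rw [← hrep] at this
    calc Ω y ≤ ∑ i, y i * Ω (fun j => if j = i then (1:ℝ) else 0) := this
      _ = 0 := by simp [hzero]
  -- inner product facts
  have hinner_mu : (inner ℝ μ q : ℝ) = ∑ i, (inner ℝ (x i) q : ℝ) / N := by
    rw [hμ, real_inner_smul_left, sum_inner]
    rw [Finset.mul_sum]
    congr 1; funext i; ring
  have hsum_theta_u : (∑ i, θ i * (1 / (N:ℝ))) = β * (inner ℝ μ q : ℝ) := by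
    rw [hinner_mu, Finset.mul_sum]
    congr 1; funext i; rw [hθ]; ring
  have hsum_theta_y : (∑ i, θ i * y i) = β * ‖q‖ ^ 2 := by
    have : (inner ℝ q q : ℝ) = ∑ i, y i * (inner ℝ (x i) q : ℝ) := by
      nth_rewrite 1 [hq]
      rw [sum_inner]
      congr 1; funext i; rw [real_inner_smul_left]
    rw [← real_inner_self_eq_norm_sq, this, Finset.mul_sum]
    congr 1; funext i; rw [hθ]; ring
  -- Ωstar bounds
  have hstar_u : β * (inner ℝ μ q : ℝ) - Ω (fun _ => 1 / (N:ℝ)) ≤ Ωstar θ := by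
    apply (hΩstar θ).2
    exact ⟨fun _ => 1 / (N:ℝ), hu, by rw [hsum_theta_u]⟩
  have hstar_y : β * ‖q‖ ^ 2 - Ω y ≤ Ωstar θ := by
    apply (hΩstar θ).2
    exact ⟨y, hy, by rw [hsum_theta_y]⟩
  -- norm expansion
  have hexp : ‖q - μ‖ ^ 2 = ‖q‖ ^ 2 - 2 * (inner ℝ μ q : ℝ) + ‖μ‖ ^ 2 := by
    rw [norm_sub_sq_real, real_inner_comm]
  -- abbreviations
  have hβinv : 0 < β⁻¹ := inv_pos.mpr hβ
  have hinner_bound : |(inner ℝ μ q : ℝ)| ≤ M * M :=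
    le_trans (abs_real_inner_le_norm μ q) (mul_le_mul hμM hqM (norm_nonneg q) hM0)
  have hq2 : ‖q‖ ^ 2 ≤ M ^ 2 := by
    rw [sq, sq]; exact mul_le_mul hqM hqM (norm_nonneg q) hM0
  have hβne : β ≠ 0 := ne_of_gt hβ
  have hfield : β⁻¹ * β = 1 := inv_mul_cancel₀ hβne
  have hSA : (inner ℝ μ q : ℝ) - β⁻¹ * Ω (fun _ => 1 / (N:ℝ)) ≤ β⁻¹ * Ωstar θ := by
    have h := mul_le_mul_of_nonneg_left hstar_u hβinv.le
    rw [mul_sub, ← mul_assoc, hfield, one_mul] at h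
    exact h
  have hSB : ‖q‖ ^ 2 - β⁻¹ * Ω y ≤ β⁻¹ * Ωstar θ := by
    have h := mul_le_mul_of_nonneg_left hstar_y hβinv.le
    rw [mul_sub, ← mul_assoc, hfield, one_mul] at h
    exact h
  have hΩy' : β⁻¹ * Ω y ≤ 0 := mul_nonpos_iff.mpr (Or.inl ⟨hβinv.le, hΩy⟩)
  have hexpand : -β⁻¹ * (Ω (fun _ => 1 / (N:ℝ)) + Ωstar θ - β * (inner ℝ μ q : ℝ))
      = -(β⁻¹ * Ω (fun _ => 1 / (N:ℝ))) - β⁻¹ * Ωstar θ + (inner ℝ μ q : ℝ) := by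
    field_simp
    ring
  have hab := abs_le.mp hinner_bound
  rw [le_min_iff]
  constructor
  · rw [hsum_theta_u, hexp, hexpand]
    linarith [hSA, hq2, hab.1]
  · rw [hsum_theta_u, hexp, hexpand]
    linarith [hSB, hΩy', sq_nonneg ‖q‖, hSA]
end

section
/- Suppose the Fenchel-Young loss L_Ω (with dom(Ω) = Δ_N) has margin m, i.e., ŷ_Ω(θ) = eᵢ iff θᵢ − max_{j≠i} θⱼ ≥ m. If the query q satisfies ⟨q, xᵢ − xⱼ⟩ ≥ m/β for all j ≠ i, then one Hopfield update gives Xᵀŷ_Ω(βXq) = xᵢ, i.e., the pattern xᵢ is retrieved exactly in one iteration. -/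
/-- One-step exact retrieval from the margin property. If the regularized
argmax `ŷ_Ω` has margin `m` (`ŷ_Ω(θ) = eᵢ` iff `θᵢ − θⱼ ≥ m` for all `j ≠ i`) and the
query satisfies `⟨q, xᵢ − xⱼ⟩ ≥ m/β` for all `j ≠ i`, then one Hopfield update
`q⁺ = Xᵀŷ_Ω(βXq)` returns exactly `xᵢ`. -/
theorem margin_one_step_retrieval {N D : ℕ}
    (x : Fin N → EuclideanSpace ℝ (Fin D)) (β : ℝ) (hβ : 0 < β) (m : ℝ)
    (yhat : (Fin N → ℝ) → (Fin N → ℝ))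
    (hmargin : ∀ (θ : Fin N → ℝ) (i : Fin N),
      yhat θ = (fun j => if j = i then 1 else 0) ↔ ∀ j, j ≠ i → m ≤ θ i - θ j)
    (q : EuclideanSpace ℝ (Fin D)) (i : Fin N)
    (hq : ∀ j, j ≠ i → m / β ≤ (inner ℝ q (x i - x j) : ℝ)) :
    ∑ j, yhat (fun l => β * (inner ℝ (x l) q : ℝ)) j • x j = x i := by
  have hy : yhat (fun l => β * (inner ℝ (x l) q : ℝ)) = (fun j => if j = i then 1 else 0) := by
    rw [hmargin]
    intro j hj
    have h := hq j hj
    have h2 : m / β * β ≤ (inner ℝ q (x i - x j) : ℝ) * β :=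
      mul_le_mul_of_nonneg_right h hβ.le
    rw [div_mul_cancel₀ _ hβ.ne'] at h2
    have hinner : (inner ℝ q (x i - x j) : ℝ) = (inner ℝ (x i) q : ℝ) - (inner ℝ (x j) q : ℝ) := by
      rw [inner_sub_right, real_inner_comm q (x i), real_inner_comm q (x j)]
    calc m ≤ (inner ℝ q (x i - x j) : ℝ) * β := h2
    _ = β * (inner ℝ (x i) q : ℝ) - β * (inner ℝ (x j) q : ℝ) := by rw [hinner]; ring
  rw [hy]
  simp
end

section
/- Assume L_Ω has margin m, all patterns have norm ‖xᵢ‖ = M, and the separation Δᵢ := ⟨xᵢ,xᵢ⟩ − max_{j≠i}⟨xᵢ,xⱼ⟩ satisfies Δᵢ ≥ m/β + 2Mε. Then every q with ‖q − xᵢ‖ ≤ ε satisfies ⟨q, xᵢ − xⱼ⟩ ≥ m/β for all j ≠ i, and hence the Hopfield update retrieves xᵢ exactly in one iteration. -/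
/-- Exact retrieval of ε-perturbed well-separated patterns (Proposition 5(3)).
If `L_Ω` has margin `m`, all patterns have norm `M`, and the separation satisfies
`Δᵢ ≥ m/β + 2Mε` (i.e. `⟨xᵢ, xᵢ⟩ − ⟨xᵢ, xⱼ⟩ ≥ m/β + 2Mε` for all `j ≠ i`), then any
`q` with `‖q − xᵢ‖ ≤ ε` satisfies `⟨q, xᵢ − xⱼ⟩ ≥ m/β` for all `j ≠ i`, and the Hopfield
update `q⁺ = Xᵀŷ_Ω(βXq)` retrieves `xᵢ` exactly in one iteration. -/
theorem separation_one_step_retrieval {N D : ℕ}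
    (x : Fin N → EuclideanSpace ℝ (Fin D)) (β : ℝ) (hβ : 0 < β)
    (m M ε : ℝ) (hε : 0 ≤ ε)
    (yhat : (Fin N → ℝ) → (Fin N → ℝ))
    (hmargin : ∀ (θ : Fin N → ℝ) (i : Fin N),
      yhat θ = (fun j => if j = i then 1 else 0) ↔ ∀ j, j ≠ i → m ≤ θ i - θ j)
    (hnorm : ∀ j, ‖x j‖ = M)
    (i : Fin N)
    (hsep : ∀ j, j ≠ i →
      m / β + 2 * M * ε ≤ (inner ℝ (x i) (x i) : ℝ) - (inner ℝ (x i) (x j) : ℝ))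
    (q : EuclideanSpace ℝ (Fin D)) (hqε : ‖q - x i‖ ≤ ε) :
    (∀ j, j ≠ i → m / β ≤ (inner ℝ q (x i - x j) : ℝ)) ∧
    ∑ j, yhat (fun l => β * (inner ℝ (x l) q : ℝ)) j • x j = x i := by
  have key : ∀ j, j ≠ i → m / β ≤ (inner ℝ q (x i - x j) : ℝ) := by
    intro j hj
    have hsplit : (inner ℝ q (x i - x j) : ℝ)
        = (inner ℝ (x i) (x i - x j) : ℝ) + (inner ℝ (q - x i) (x i - x j) : ℝ) := by
      rw [← inner_add_left, add_sub_cancel]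
    have hcs : |(inner ℝ (q - x i) (x i - x j) : ℝ)| ≤ ε * (2 * M) := by
      calc |(inner ℝ (q - x i) (x i - x j) : ℝ)| ≤ ‖q - x i‖ * ‖x i - x j‖ :=
            abs_real_inner_le_norm _ _
        _ ≤ ε * (2 * M) := by
            have h1 : ‖x i - x j‖ ≤ 2 * M := by
              calc ‖x i - x j‖ ≤ ‖x i‖ + ‖x j‖ := norm_sub_le _ _
                _ = 2 * M := by rw [hnorm, hnorm]; ring
            exact mul_le_mul hqε h1 (norm_nonneg _) hε
    have h2 : -(ε * (2 * M)) ≤ (inner ℝ (q - x i) (x i - x j) : ℝ) := neg_le_of_abs_le hcs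
    have h3 : m / β + 2 * M * ε ≤ (inner ℝ (x i) (x i - x j) : ℝ) := by
      rw [inner_sub_right]; exact hsep j hj
    rw [hsplit]; nlinarith
  refine ⟨key, ?_⟩
  have hy : yhat (fun l => β * (inner ℝ (x l) q : ℝ)) = (fun j => if j = i then 1 else 0) := by
    rw [hmargin]
    intro j hj
    have hk := key j hj
    have : (inner ℝ q (x i - x j) : ℝ) = (inner ℝ (x i) q : ℝ) - (inner ℝ (x j) q : ℝ) := by
      rw [real_inner_comm, inner_sub_left]
    have hβm : m ≤ β * (inner ℝ q (x i - x j) : ℝ) := by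
      have := mul_le_mul_of_nonneg_left hk hβ.le
      rwa [mul_div_cancel₀ _ hβ.ne'] at this
    calc m ≤ β * (inner ℝ q (x i - x j) : ℝ) := hβm
      _ = β * (inner ℝ (x i) q : ℝ) - β * (inner ℝ (x j) q : ℝ) := by rw [this]; ring
  rw [hy]
  simp
end

section
/- Let 𝒴 ⊆ {0,1}^N with ‖y‖² = k for all y ∈ 𝒴 (k-subsets). If q satisfies ⟨q, Xᵀ(yᵢ − yⱼ)⟩ ≥ Dᵢ²/(2β) for all j ≠ i, where Dᵢ = max_j ‖yᵢ − yⱼ‖, then SparseMAP(βXq) = yᵢ and the structured Hopfield update q⁺ = Xᵀ SparseMAP(βXq) returns the pattern association Xᵀyᵢ in one iteration. -/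
/-- Exact structured retrieval with SparseMAP over k-subsets. With
`𝒴 = {y ∈ {0,1}^N : 1ᵀy = k}` and `SparseMAP(θ) = argmax_{μ ∈ conv(𝒴)} ⟨θ,μ⟩ − ½‖μ‖²`,
if the query satisfies `⟨q, Xᵀ(yᵢ − y')⟩ ≥ Dᵢ²/(2β)` for all `y' ∈ 𝒴`, `y' ≠ yᵢ`, where
`Dᵢ` bounds `‖yᵢ − y'‖`, then `SparseMAP(βXq) = yᵢ` and the structured Hopfield update
returns the pattern association `Xᵀyᵢ` in one iteration. -/
theorem sparsemap_one_step_structured_retrieval {N D : ℕ}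
    (x : Fin N → EuclideanSpace ℝ (Fin D)) (k : ℕ) (β : ℝ) (hβ : 0 < β)
    (Y : Set (EuclideanSpace ℝ (Fin N)))
    (hY : Y = {y : EuclideanSpace ℝ (Fin N) |
      (∀ i, y i = 0 ∨ y i = 1) ∧ (∑ i, y i) = (k : ℝ)})
    (sparseMAP : (Fin N → ℝ) → EuclideanSpace ℝ (Fin N))
    (hsm : ∀ θ : Fin N → ℝ, sparseMAP θ ∈ convexHull ℝ Y ∧
      ∀ μ ∈ convexHull ℝ Y,
        (∑ i, θ i * μ i) - (1 / 2) * ‖μ‖ ^ 2 ≤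
          (∑ i, θ i * sparseMAP θ i) - (1 / 2) * ‖sparseMAP θ‖ ^ 2)
    (yi : EuclideanSpace ℝ (Fin N)) (hyi : yi ∈ Y)
    (Di : ℝ) (hDi : ∀ y' ∈ Y, ‖yi - y'‖ ≤ Di)
    (q : EuclideanSpace ℝ (Fin D))
    (hq : ∀ y' ∈ Y, y' ≠ yi →
      Di ^ 2 / (2 * β) ≤ (inner ℝ q (∑ j, (yi j - y' j) • x j) : ℝ)) :
    sparseMAP (fun j => β * (inner ℝ (x j) q : ℝ)) = yi ∧
    ∑ j, sparseMAP (fun j => β * (inner ℝ (x j) q : ℝ)) j • x j = ∑ j, yi j • x j := by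
  set θ : Fin N → ℝ := fun j => β * (inner ℝ (x j) q : ℝ) with hθ
  set t : EuclideanSpace ℝ (Fin N) := WithLp.toLp 2 θ with ht
  set s : EuclideanSpace ℝ (Fin N) := sparseMAP θ with hs
  obtain ⟨hsmem, hsopt⟩ := hsm θ
  -- inner products as sums
  have hinner : ∀ a b : EuclideanSpace ℝ (Fin N),
      (inner ℝ a b : ℝ) = ∑ i, a i * b i := by
    intro a b
    simp [PiLp.inner_apply, RCLike.inner_apply, conj_trivial, mul_comm]
  -- every y in Y has ⟨y,y⟩ = k
  have hnorm : ∀ y ∈ Y, (inner ℝ y y : ℝ) = (k : ℝ) := by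
    intro y hy
    rw [hY] at hy
    obtain ⟨h01, hsum⟩ := hy
    rw [hinner, ← hsum]
    apply Finset.sum_congr rfl
    intro i _
    rcases h01 i with h | h <;> simp [h]
  have hDi0 : 0 ≤ Di := le_trans (norm_nonneg _) (hDi yi hyi)
  -- margin: for all y' in Y, ⟨t - yi, y' - yi⟩ ≤ 0
  have hmargin : ∀ y' ∈ Y, (inner ℝ (t - yi) (y' - yi) : ℝ) ≤ 0 := by
    intro y' hy'
    by_cases hne : y' = yi
    · simp [hne]
    · have h1 := hq y' hy' hne
      have h2 : (inner ℝ q (∑ j, (yi j - y' j) • x j) : ℝ)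
          = ∑ j, (yi j - y' j) * (inner ℝ (x j) q : ℝ) := by
        rw [inner_sum]
        apply Finset.sum_congr rfl
        intro j _
        rw [real_inner_smul_right, real_inner_comm]
      have h3 : (inner ℝ t (yi - y') : ℝ) = β * ∑ j, (yi j - y' j) * (inner ℝ (x j) q : ℝ) := by
        rw [hinner, Finset.mul_sum]
        apply Finset.sum_congr rfl
        intro j _
        show β * (inner ℝ (x j) q : ℝ) * (yi j - y' j) = _
        ring
      have h4 : Di ^ 2 / 2 ≤ (inner ℝ t (yi - y') : ℝ) := by
        rw [h3, ← h2]
        rw [div_le_iff₀ (by positivity)] at h1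
        nlinarith [h1]
      have h5 : ‖yi - y'‖ ^ 2 ≤ Di ^ 2 := by
        have := hDi y' hy'
        nlinarith [norm_nonneg (yi - y')]
      have h6 : ‖yi - y'‖ ^ 2 = 2 * (k : ℝ) - 2 * (inner ℝ yi y' : ℝ) := by
        rw [← real_inner_self_eq_norm_sq, inner_sub_sub_self,
          hnorm yi hyi, hnorm y' hy', real_inner_comm y' yi]
        ring
      have h7 : (inner ℝ yi (yi - y') : ℝ) = (k : ℝ) - (inner ℝ yi y' : ℝ) := by
        rw [inner_sub_right, hnorm yi hyi]
      have h8 : (inner ℝ (t - yi) (y' - yi) : ℝ)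
          = -(inner ℝ t (yi - y') : ℝ) + (inner ℝ yi (yi - y') : ℝ) := by
        simp only [inner_sub_left, inner_sub_right]
        ring
      rw [h8, h7]
      nlinarith [h4, h5, h6]
  -- extend to the convex hull
  have hhull : ∀ μ ∈ convexHull ℝ Y, (inner ℝ (t - yi) (μ - yi) : ℝ) ≤ 0 := by
    intro μ hμ
    have hconv : Convex ℝ {w : EuclideanSpace ℝ (Fin N) |
        (inner ℝ (t - yi) w : ℝ) ≤ (inner ℝ (t - yi) yi : ℝ)} := by
      apply convex_halfSpace_le
      exact ⟨fun a b => inner_add_right _ _ _, fun c a => real_inner_smul_right _ _ _⟩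
    have hsub : Y ⊆ {w : EuclideanSpace ℝ (Fin N) |
        (inner ℝ (t - yi) w : ℝ) ≤ (inner ℝ (t - yi) yi : ℝ)} := by
      intro y' hy'
      have h := hmargin y' hy'
      rw [inner_sub_right] at h
      simp only [Set.mem_setOf_eq]
      linarith
    have h := convexHull_min hsub hconv hμ
    simp only [Set.mem_setOf_eq] at h
    rw [inner_sub_right]
    linarith
  -- optimality of s vs yi
  have hyi_hull : yi ∈ convexHull ℝ Y := subset_convexHull ℝ Y hyi
  have hopt := hsopt yi hyi_hull
  have hA : (∑ i, θ i * yi i) = (inner ℝ t yi : ℝ) := (hinner t yi).symm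
  have hB : (∑ i, θ i * s i) = (inner ℝ t s : ℝ) := (hinner t s).symm
  have hns : ‖s‖ ^ 2 = (inner ℝ s s : ℝ) := (real_inner_self_eq_norm_sq s).symm
  have hnyi : ‖yi‖ ^ 2 = (inner ℝ yi yi : ℝ) := (real_inner_self_eq_norm_sq yi).symm
  rw [hA, hB, hns, hnyi] at hopt
  have hhs := hhull s hsmem
  rw [inner_sub_left, inner_sub_right, inner_sub_right] at hhs
  have hzero : ‖s - yi‖ ^ 2 ≤ 0 := by
    rw [← real_inner_self_eq_norm_sq, inner_sub_sub_self]
    have hc : (inner ℝ s yi : ℝ) = (inner ℝ yi s : ℝ) := real_inner_comm yi s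
    have hc2 : (inner ℝ yi t : ℝ) = (inner ℝ t yi : ℝ) := real_inner_comm t yi
    have hc3 : (inner ℝ s t : ℝ) = (inner ℝ t s : ℝ) := real_inner_comm t s
    nlinarith [hopt, hhs]
  have hseq : s = yi := by
    have : ‖s - yi‖ = 0 := by
      nlinarith [norm_nonneg (s - yi), sq_nonneg ‖s - yi‖]
    rwa [norm_sub_eq_zero_iff] at this
  refine ⟨hseq, ?_⟩
  rw [hseq]
end
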